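/- Orthogonality of the cas kernel (Theorem 1): for all integers i and t, ∑_{k=0}^{N−1} cas_k(i)·cas_k(t) equals (N : K) if i ≡ t (mod N), and equals 0 otherwise. -/

import Mathlib

open scoped BigOperators

/-- The finite field cosine: `cos_k(∠α^i) = (α^{ik} + α^{-ik})/2`,
where `α^{-ik}` denotes `(α⁻¹)^{ik}`. -/
noncomputable def fcos {K : Type*} [Field K] (α : Kˣ) (k i : ℤ) : K :=
  (((α ^ (i * k) : Kˣ) : K) + ((α⁻¹ ^ (i * k) : Kˣ) : K)) / 2

/-- The finite field sine: `sin_k(∠α^i) = (α^{ik} - α^{-ik})/(2j)`. -/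
noncomputable def fsin {K : Type*} [Field K] (α : Kˣ) (j : K) (k i : ℤ) : K :=
  (((α ^ (i * k) : Kˣ) : K) - ((α⁻¹ ^ (i * k) : Kˣ) : K)) / (2 * j)

/-- The finite field `cas` function: `cas_k(∠α^i) = cos_k(∠α^i) + sin_k(∠α^i)`. -/
noncomputable def fcas {K : Type*} [Field K] (α : Kˣ) (j : K) (k i : ℤ) : K :=
  fcos α k i + fsin α j k i

lemma sum_zpow_aux {K : Type*} [Field K] (α : Kˣ) (N : ℕ) (hα : orderOf α = N) (m : ℤ) :
    ∑ k ∈ Finset.range N, ((α ^ (m * (k : ℤ)) : Kˣ) : K) =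
      if (N : ℤ) ∣ m then (N : K) else 0 := by
  have hre : ∀ k ∈ Finset.range N,
      ((α ^ (m * (k : ℤ)) : Kˣ) : K) = (((α ^ m : Kˣ) : K)) ^ k := by
    intro k _
    rw [zpow_mul, zpow_natCast, Units.val_pow_eq_pow_val]
  rw [Finset.sum_congr rfl hre]
  by_cases h : (N : ℤ) ∣ m
  · have h1 : α ^ m = 1 := by
      have : (orderOf α : ℤ) ∣ m := by rwa [hα]
      exact orderOf_dvd_iff_zpow_eq_one.mp this
    simp [h1, h]
  · have hne : ((α ^ m : Kˣ) : K) ≠ 1 := by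
      intro hx
      have h1 : α ^ m = 1 := Units.ext hx
      have := orderOf_dvd_iff_zpow_eq_one.mpr h1
      rw [hα] at this
      exact h this
    rw [geom_sum_eq hne]
    have hNone : ((α ^ m : Kˣ) : K) ^ N = 1 := by
      have : (α ^ m) ^ N = 1 := by
        rw [← zpow_natCast, ← zpow_mul, mul_comm, zpow_mul, zpow_natCast, ← hα,
          pow_orderOf_eq_one, one_zpow]
      rw [← Units.val_pow_eq_pow_val, this, Units.val_one]
    rw [hNone, sub_self, zero_div, if_neg h]

lemma key_aux {K : Type*} [Field K] (α : Kˣ) (j : K) (hj : j ^ 2 = -1)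
    (h2 : (2 : K) ≠ 0) (hj0 : j ≠ 0) (i t k : ℤ) :
    fcas α j k i * fcas α j k t =
      (((α ^ ((i - t) * k) : Kˣ) : K) + ((α ^ ((t - i) * k) : Kˣ) : K)
        - j * (((α ^ ((i + t) * k) : Kˣ) : K) - ((α ^ (-(i + t) * k) : Kˣ) : K))) / 2 := by
  have ha : ((α ^ (i * k) : Kˣ) : K) ≠ 0 := Units.ne_zero _
  have hb : ((α ^ (t * k) : Kˣ) : K) ≠ 0 := Units.ne_zero _
  have e1 : ((α ^ ((i - t) * k) : Kˣ) : K)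
      = ((α ^ (i * k) : Kˣ) : K) * ((α ^ (t * k) : Kˣ) : K)⁻¹ := by
    rw [← Units.val_inv_eq_inv_val, ← Units.val_mul, ← zpow_neg, ← zpow_add]
    congr 2; ring
  have e2 : ((α ^ ((t - i) * k) : Kˣ) : K)
      = ((α ^ (t * k) : Kˣ) : K) * ((α ^ (i * k) : Kˣ) : K)⁻¹ := by
    rw [← Units.val_inv_eq_inv_val, ← Units.val_mul, ← zpow_neg, ← zpow_add]
    congr 2; ring
  have e3 : ((α ^ ((i + t) * k) : Kˣ) : K)
      = ((α ^ (i * k) : Kˣ) : K) * ((α ^ (t * k) : Kˣ) : K) := by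
    rw [← Units.val_mul, ← zpow_add]
    congr 2; ring
  have e4 : ((α ^ (-(i + t) * k) : Kˣ) : K)
      = ((α ^ (i * k) : Kˣ) : K)⁻¹ * ((α ^ (t * k) : Kˣ) : K)⁻¹ := by
    rw [← Units.val_inv_eq_inv_val, ← Units.val_inv_eq_inv_val, ← Units.val_mul,
      ← zpow_neg, ← zpow_neg, ← zpow_add]
    congr 2; ring
  have e5 : ((α⁻¹ ^ (i * k) : Kˣ) : K) = ((α ^ (i * k) : Kˣ) : K)⁻¹ := by
    rw [inv_zpow, Units.val_inv_eq_inv_val]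
  have e6 : ((α⁻¹ ^ (t * k) : Kˣ) : K) = ((α ^ (t * k) : Kˣ) : K)⁻¹ := by
    rw [inv_zpow, Units.val_inv_eq_inv_val]
  simp only [fcas, fcos, fsin, e1, e2, e3, e4, e5, e6]
  field_simp
  linear_combination (1 - ((α ^ (i * k) : Kˣ) : K) ^ 2 + ((α ^ (i * k) : Kˣ) : K) ^ 2 * ((α ^ (t * k) : Kˣ) : K) ^ 2 -
    ((α ^ (t * k) : Kˣ) : K) ^ 2 + 2 * ((α ^ (i * k) : Kˣ) : K) ^ 2 * ((α ^ (t * k) : Kˣ) : K) ^ 2 * j -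
    2 * j) * hj

open Classical in
/-- Theorem 1, orthogonality of the cas kernel:
`∑_{k=0}^{N-1} cas_k(i)·cas_k(t)` equals `N` when `i ≡ t (mod N)` and `0` otherwise. -/
theorem fcas_orthogonal (p : ℕ) (hp : p.Prime) (hpodd : Odd p)
    (K : Type*) [Field K] [CharP K p] (j : K) (hj : j ^ 2 = -1)
    (α : Kˣ) (N : ℕ) (hN : 1 ≤ N) (hα : orderOf α = N) (i t : ℤ) :
    (∑ k ∈ Finset.range N, fcas α j (k : ℤ) i * fcas α j (k : ℤ) t) =
      if i ≡ t [ZMOD (N : ℤ)] then (N : K) else 0 := by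
  have h2 : (2 : K) ≠ 0 := by
    intro h
    have hdvd : p ∣ 2 := (CharP.cast_eq_zero_iff K p 2).mp h
    have : p = 2 := (Nat.prime_dvd_prime_iff_eq hp Nat.prime_two).mp hdvd
    rw [this] at hpodd
    exact Nat.not_odd_iff_even.mpr even_two hpodd
  have hj0 : j ≠ 0 := by
    intro h
    rw [h] at hj
    simp at hj
  have key : ∀ k ∈ Finset.range N,
      fcas α j (k : ℤ) i * fcas α j (k : ℤ) t =
        (((α ^ ((i - t) * (k : ℤ)) : Kˣ) : K) + ((α ^ ((t - i) * (k : ℤ)) : Kˣ) : K)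
          - j * (((α ^ ((i + t) * (k : ℤ)) : Kˣ) : K)
            - ((α ^ (-(i + t) * (k : ℤ)) : Kˣ) : K))) / 2 :=
    fun k _ => key_aux α j hj h2 hj0 i t k
  rw [Finset.sum_congr rfl key]
  rw [← Finset.sum_div]
  simp only [Finset.sum_sub_distrib, Finset.sum_add_distrib, ← Finset.mul_sum]
  rw [sum_zpow_aux α N hα (i - t), sum_zpow_aux α N hα (t - i),
    sum_zpow_aux α N hα (i + t), sum_zpow_aux α N hα (-(i + t))]
  have h21 : ((N : ℤ) ∣ (t - i)) ↔ ((N : ℤ) ∣ (i - t)) := dvd_sub_comm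
  have h34 : ((N : ℤ) ∣ -(i + t)) ↔ ((N : ℤ) ∣ (i + t)) := dvd_neg
  have hmod : (i ≡ t [ZMOD (N : ℤ)]) ↔ (N : ℤ) ∣ (i - t) := by
    rw [Int.modEq_iff_dvd, dvd_sub_comm]
  simp only [h21, h34, hmod]
  by_cases hd : (N : ℤ) ∣ (i - t) <;> by_cases hs : (N : ℤ) ∣ (i + t) <;>
    simp [hd, hs] <;> field_simp <;> ring
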